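/- For any connected finite simple graph G, the bandwidth of G is at most 2·bfsw(G) − 1, where bfsw(G) = max over vertices v of max over i of |{u : d(v,u)=i}|. -/

import Mathlib

open SimpleGraph

/-- Number of vertices at distance exactly `i` from `v`. -/
noncomputable def layerCard {V : Type*} (G : SimpleGraph V) (v : V) (i : ℕ) : ℕ :=
  ({u : V | G.dist v u = i}).ncard

/-- BFS width of `G` from root `v`: the maximum layer size. -/
noncomputable def bfswFrom {V : Type*} (G : SimpleGraph V) (v : V) : ℕ :=
  sSup (Set.range (layerCard G v))

/-- BFS width of `G`: maximum over roots. -/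
noncomputable def bfsw {V : Type*} (G : SimpleGraph V) : ℕ :=
  sSup (Set.range (bfswFrom G))

/-- Minimum BFS width of `G`: minimum over roots. -/
noncomputable def bfswMin {V : Type*} (G : SimpleGraph V) : ℕ :=
  sInf (Set.range (bfswFrom G))

/-- Bandwidth of `G`: least `b` such that some linear layout has all edges of length `≤ b`. -/
noncomputable def bw {V : Type*} [Fintype V] (G : SimpleGraph V) : ℕ :=
  sInf { b : ℕ | ∃ f : V ≃ Fin (Fintype.card V),
    ∀ u w : V, G.Adj u w → ((f u : ℤ) - (f w : ℤ)).natAbs ≤ b }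

/-- The bandwidth of a connected graph is at most twice its BFS width minus one. -/
theorem bw_le_two_bfsw {V : Type*} [Fintype V] [Nonempty V]
    (G : SimpleGraph V) (hG : G.Connected) :
    bw G ≤ 2 * bfsw G - 1 := by
  classical
  obtain ⟨v⟩ := (inferInstance : Nonempty V)
  set W := bfsw G with hWdef
  -- layer card as finset card
  have hlayerFin : ∀ i, layerCard G v i = (Finset.univ.filter (fun x => G.dist v x = i)).card := by
    intro i
    rw [layerCard, Set.ncard_eq_toFinset_card']
    congr 1
    ext x
    simp
  have hlayercard : ∀ i, layerCard G v i ≤ Fintype.card V := by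
    intro i
    rw [hlayerFin]
    exact Finset.card_filter_le _ _
  have hlayer : ∀ i, layerCard G v i ≤ W := by
    intro i
    have h1 : layerCard G v i ≤ bfswFrom G v :=
      le_csSup ⟨Fintype.card V, by rintro x ⟨j, rfl⟩; exact hlayercard j⟩ ⟨i, rfl⟩
    have h2 : bfswFrom G v ≤ W := by
      refine le_csSup ⟨Fintype.card V, ?_⟩ ⟨v, rfl⟩
      rintro x ⟨u, rfl⟩
      exact csSup_le ⟨layerCard G u 0, 0, rfl⟩ (by
        rintro y ⟨j, rfl⟩
        rw [show layerCard G u j = (Finset.univ.filter (fun x => G.dist u x = j)).card from by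
          rw [layerCard, Set.ncard_eq_toFinset_card']; congr 1; ext x; simp]
        exact Finset.card_filter_le _ _)
    exact h1.trans h2
  -- linear order
  let e := Fintype.equivFin V
  let key : V → ℕ ×ₗ Fin (Fintype.card V) := fun u => toLex (G.dist v u, e u)
  have hinj : Function.Injective key := by
    intro a b h
    have : (G.dist v a, e a) = (G.dist v b, e b) := congrArg ofLex h
    exact e.injective (congrArg Prod.snd this)
  letI : LinearOrder V := LinearOrder.lift' key hinj
  have hkeyle : ∀ a b : V, a ≤ b ↔ key a ≤ key b := fun a b => Iff.rfl
  have hdistmono : ∀ a b : V, a ≤ b → G.dist v a ≤ G.dist v b := by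
    intro a b h
    rw [hkeyle] at h
    rcases Prod.Lex.le_iff.1 h with h' | h'
    · exact h'.le
    · exact h'.1.le
  letI : LocallyFiniteOrder V := Fintype.toLocallyFiniteOrder
  let g : V ≃o Fin (Fintype.card V) := (monoEquivOfFin V rfl).symm
  -- main bound for ordered adjacent pairs
  have main : ∀ u w : V, G.Adj u w → u ≤ w →
      ((g u : ℤ) - (g w : ℤ)).natAbs ≤ 2 * W - 1 := by
    intro u w hadj hle
    have hgle : g u ≤ g w := g.le_iff_le.2 hle
    have hval : (g u : ℕ) ≤ (g w : ℕ) := hgle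
    have h1 : ((g u : ℤ) - (g w : ℤ)).natAbs = (g w : ℕ) - (g u : ℕ) := by omega
    rw [h1]
    have h2 : (g w : ℕ) - (g u : ℕ) = (Finset.Ico (g u) (g w)).card := (Fin.card_Ico _ _).symm
    have himg : Finset.Ico (g u) (g w) = (Finset.Ico u w).image g := by
      ext x
      simp only [Finset.mem_image, Finset.mem_Ico]
      constructor
      · rintro ⟨ha, hb⟩
        refine ⟨g.symm x, ⟨?_, ?_⟩, g.apply_symm_apply x⟩
        · exact (g.le_symm_apply).2 (by simpa using ha)
        · exact lt_of_not_ge fun h => absurd ((g.le_iff_le).2 h) (not_le.2 (by simpa using hb))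
      · rintro ⟨a, ⟨ha, hb⟩, rfl⟩
        exact ⟨g.le_iff_le.2 ha, g.lt_iff_lt.2 hb⟩
    have hcardeq : (Finset.Ico (g u) (g w)).card = (Finset.Ico u w).card := by
      rw [himg, Finset.card_image_of_injective _ g.injective]
    rw [h2, hcardeq]
    -- distance bounds
    set i := G.dist v u with hi
    set j := G.dist v w with hj
    have hij : i ≤ j := hdistmono u w hle
    have hji : j ≤ i + 1 := by
      calc j ≤ G.dist v u + G.dist u w := hG.dist_triangle
      _ = i + 1 := by
          have : G.dist u w = 1 := dist_eq_one_iff_adj.2 hadj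
          omega
    have hsub : Finset.Ico u w ⊆ ((Finset.univ.filter (fun x => G.dist v x = i)) ∪
        (Finset.univ.filter (fun x => G.dist v x = j))).erase w := by
      intro x hx
      rw [Finset.mem_Ico] at hx
      have hxi : i ≤ G.dist v x := hdistmono u x hx.1
      have hxj : G.dist v x ≤ j := hdistmono x w hx.2.le
      refine Finset.mem_erase.2 ⟨hx.2.ne, ?_⟩
      rcases Nat.eq_or_lt_of_le hxi with h | h
      · exact Finset.mem_union_left _ (Finset.mem_filter.2 ⟨Finset.mem_univ _, h.symm⟩)
      · refine Finset.mem_union_right _ (Finset.mem_filter.2 ⟨Finset.mem_univ _, ?_⟩)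
        omega
    have hwmem : w ∈ (Finset.univ.filter (fun x => G.dist v x = i)) ∪
        (Finset.univ.filter (fun x => G.dist v x = j)) :=
      Finset.mem_union_right _ (Finset.mem_filter.2 ⟨Finset.mem_univ _, rfl⟩)
    calc (Finset.Ico u w).card
        ≤ (((Finset.univ.filter (fun x => G.dist v x = i)) ∪
            (Finset.univ.filter (fun x => G.dist v x = j))).erase w).card :=
          Finset.card_le_card hsub
      _ = ((Finset.univ.filter (fun x => G.dist v x = i)) ∪
            (Finset.univ.filter (fun x => G.dist v x = j))).card - 1 :=
          Finset.card_erase_of_mem hwmem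
      _ ≤ 2 * W - 1 := by
          have hu : ((Finset.univ.filter (fun x => G.dist v x = i)) ∪
              (Finset.univ.filter (fun x => G.dist v x = j))).card ≤ 2 * W := by
            calc _ ≤ (Finset.univ.filter (fun x => G.dist v x = i)).card +
                (Finset.univ.filter (fun x => G.dist v x = j)).card := Finset.card_union_le _ _
            _ ≤ W + W := by
                have := hlayer i; have := hlayer j
                rw [hlayerFin i] at *; rw [hlayerFin j] at *
                omega
            _ = 2 * W := by ring
          omega
  refine Nat.sInf_le ⟨g.toEquiv, ?_⟩
  intro u w hadj
  rcases le_total u w with h | h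
  · exact main u w hadj h
  · have := main w u hadj.symm h
    have heq : ((g.toEquiv u : ℤ) - (g.toEquiv w : ℤ)).natAbs
        = ((g w : ℤ) - (g u : ℤ)).natAbs := by
      show (((g u : ℕ) : ℤ) - ((g w : ℕ) : ℤ)).natAbs = _
      omega
    rw [heq]; exact this
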